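/- For a, b, c > 0 and 0 < x < y, we have x * log₂(1 + a/(b x + c)) < y * log₂(1 + a/(b y + c)). -/

import Mathlib

/-- `u ↦ u * log (1 + a/u)` is strictly increasing on `u > 0`, via strict concavity of `log`. -/
lemma mul_log_one_add_div_lt (a u v : ℝ) (ha : 0 < a) (hu : 0 < u) (huv : u < v) :
    u * Real.log (1 + a / u) < v * Real.log (1 + a / v) := by
  have hv : 0 < v := hu.trans huv
  have hl : 0 < u / v := div_pos hu hv
  have hl1 : u / v < 1 := (div_lt_one hv).2 huv
  have hx1 : (1 : ℝ) + a / u ∈ Set.Ioi (0 : ℝ) := by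
    have : 0 < a / u := div_pos ha hu
    simp [Set.mem_Ioi]; linarith
  have hx2 : (1 : ℝ) ∈ Set.Ioi (0 : ℝ) := by norm_num
  have hne : (1 : ℝ) + a / u ≠ 1 := by
    have : 0 < a / u := div_pos ha hu
    linarith
  have key : (u / v) • Real.log (1 + a / u) + (1 - u / v) • Real.log 1 <
      Real.log ((u / v) • (1 + a / u) + (1 - u / v) • (1 : ℝ)) :=
    strictConcaveOn_log_Ioi.2 hx1 hx2 hne hl (by linarith) (by ring)
  have hcomb : (u / v) • (1 + a / u) + (1 - u / v) • (1 : ℝ) = 1 + a / v := by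
    rw [smul_eq_mul, smul_eq_mul]
    field_simp
    ring
  rw [hcomb, smul_eq_mul, smul_eq_mul, Real.log_one, mul_zero, add_zero] at key
  calc u * Real.log (1 + a / u) = (u / v * Real.log (1 + a / u)) * v := by
        field_simp
    _ < Real.log (1 + a / v) * v := mul_lt_mul_of_pos_right key hv
    _ = v * Real.log (1 + a / v) := by ring

/-- For `a, b, c > 0` and `0 < x < y`,
`x log₂(1 + a/(bx+c)) < y log₂(1 + a/(by+c))`. -/
theorem mul_logb_lt_mul_logb (a b c x y : ℝ) (ha : 0 < a) (hb : 0 < b) (hc : 0 < c)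
    (hx : 0 < x) (hxy : x < y) :
    x * Real.logb 2 (1 + a / (b * x + c)) < y * Real.logb 2 (1 + a / (b * y + c)) := by
  set u := b * x + c with hu_def
  set v := b * y + c with hv_def
  have hu : 0 < u := by positivity
  have hv : 0 < v := by have := hx.trans hxy; positivity
  have huv : u < v := by
    have := mul_lt_mul_of_pos_left hxy hb
    simp only [hu_def, hv_def]; linarith
  have hlog2 : 0 < Real.log 2 := Real.log_pos (by norm_num)
  simp only [Real.logb]
  rw [← mul_div_assoc, ← mul_div_assoc, div_lt_div_iff_of_pos_right hlog2]
  -- reduce to the log statement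
  have h1 : u * Real.log (1 + a / u) < v * Real.log (1 + a / v) :=
    mul_log_one_add_div_lt a u v ha hu huv
  have h2 : Real.log (1 + a / v) ≤ Real.log (1 + a / u) := by
    apply Real.log_le_log (by positivity)
    have : a / v ≤ a / u := div_le_div_of_nonneg_left ha.le hu huv.le
    linarith
  have hlogv_pos : 0 < Real.log (1 + a / v) := by
    apply Real.log_pos
    have : 0 < a / v := div_pos ha hv
    linarith
  have hbx : b * x = u - c := by simp [hu_def]
  have hby : b * y = v - c := by simp [hv_def]
  have key : b * (x * Real.log (1 + a / u)) < b * (y * Real.log (1 + a / v)) := by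
    have e1 : b * (x * Real.log (1 + a / u)) = u * Real.log (1 + a / u) - c * Real.log (1 + a / u) := by
      rw [← mul_assoc, hbx]; ring
    have e2 : b * (y * Real.log (1 + a / v)) = v * Real.log (1 + a / v) - c * Real.log (1 + a / v) := by
      rw [← mul_assoc, hby]; ring
    rw [e1, e2]
    have : c * Real.log (1 + a / v) ≤ c * Real.log (1 + a / u) :=
      mul_le_mul_of_nonneg_left h2 hc.le
    linarith
  exact lt_of_mul_lt_mul_left key hb.le
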